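/- Let H be an infinite-dimensional complex Hilbert space and f : G_∞(H) → G_∞(H) a map sending every pair of subspaces to an equivalent pair. Then for all X, Y ∈ G_∞(H) with Y ⊆ X, the codimension of Y in X equals the codimension of f(Y) in f(X). -/

import Mathlib

open Cardinal

theorem hb_mk_le {E : Type} [NormedAddCommGroup E] [InnerProductSpace ℂ E]
    {ι κ : Type} [Infinite ι] (b : HilbertBasis ι ℂ E) (c : HilbertBasis κ ℂ E) :
    Cardinal.mk κ ≤ Cardinal.mk ι := by
  classical
  set A : ι → Set κ := fun i => {k | c.repr (b i) k ≠ 0} with hA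
  have hAc : ∀ i, (A i).Countable := by
    intro i
    have h1 : Summable fun k => ‖c.repr (b i) k‖ ^ (2 : ENNReal).toReal :=
      (lp.memℓp (c.repr (b i))).summable (by norm_num)
    refine h1.countable_support.mono ?_
    intro k hk
    have hk' : c.repr (b i) k ≠ 0 := hk
    have hnz : ‖c.repr (b i) k‖ ≠ 0 := norm_ne_zero_iff.2 hk'
    simp only [Function.mem_support]
    exact (Real.rpow_pos_of_pos (norm_pos_iff.2 hk') _).ne'
  have hcov : ∀ k : κ, ∃ i, k ∈ A i := by
    intro k
    by_contra h
    push_neg at h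
    have h0 : ∀ i, c.repr (b i) k = 0 := by
      intro i
      have := h i
      simpa [hA] using this
    have hrep : b.repr (c k) = 0 := by
      ext i
      have h1 : c.repr (b i) k = inner (𝕜 := ℂ) (c k) (b i) := c.repr_apply_apply (b i) k
      have h2 : b.repr (c k) i = inner (𝕜 := ℂ) (b i) (c k) := b.repr_apply_apply (c k) i
      rw [h2, ← inner_conj_symm, ← h1, h0 i]
      simp
    have hk0 : c k = 0 := by
      apply b.repr.injective
      rw [hrep, map_zero]
    have h1norm : ‖c k‖ = 1 := c.orthonormal.1 k
    rw [hk0, norm_zero] at h1norm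
    exact zero_ne_one h1norm
  have huniv : (⋃ i, A i) = Set.univ := Set.iUnion_eq_univ_iff.2 hcov
  calc #κ = #(⋃ i, A i) := by rw [huniv, Cardinal.mk_univ]
    _ ≤ #ι * ⨆ i, #(A i) := Cardinal.mk_iUnion_le A
    _ ≤ #ι * ℵ₀ := by
        refine mul_le_mul_right ?_ _
        exact ciSup_le' fun i => (Cardinal.mk_le_aleph0_iff).2 ((hAc i).to_subtype)
    _ = #ι := Cardinal.mk_mul_aleph0_eq


theorem hb_mk_eq {E : Type} [NormedAddCommGroup E] [InnerProductSpace ℂ E]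
    {ι κ : Type} (b : HilbertBasis ι ℂ E) (c : HilbertBasis κ ℂ E) :
    Cardinal.mk ι = Cardinal.mk κ := by
  classical
  cases finite_or_infinite ι with
  | inl hι =>
    cases finite_or_infinite κ with
    | inl hκ =>
      haveI := Fintype.ofFinite ι
      haveI := Fintype.ofFinite κ
      haveI : FiniteDimensional ℂ E := Module.Finite.of_basis b.toOrthonormalBasis.toBasis
      rw [Cardinal.mk_fintype, Cardinal.mk_fintype,
        ← Module.finrank_eq_card_basis b.toOrthonormalBasis.toBasis,
        ← Module.finrank_eq_card_basis c.toOrthonormalBasis.toBasis]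
    | inr hκ =>
      exfalso
      haveI := Fintype.ofFinite ι
      haveI : FiniteDimensional ℂ E := Module.Finite.of_basis b.toOrthonormalBasis.toBasis
      have h1 : #κ ≤ Module.rank ℂ E := c.orthonormal.linearIndependent.cardinal_le_rank
      have h2 : Module.rank ℂ E < ℵ₀ := Module.rank_lt_aleph0 ℂ E
      exact absurd ((Cardinal.aleph0_le_mk κ).trans h1) (not_le.2 h2)
  | inr hι =>
    cases finite_or_infinite κ with
    | inl hκ =>
      exfalso
      haveI := Fintype.ofFinite κ
      haveI : FiniteDimensional ℂ E := Module.Finite.of_basis c.toOrthonormalBasis.toBasis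
      have h1 : #ι ≤ Module.rank ℂ E := b.orthonormal.linearIndependent.cardinal_le_rank
      have h2 : Module.rank ℂ E < ℵ₀ := Module.rank_lt_aleph0 ℂ E
      exact absurd ((Cardinal.aleph0_le_mk ι).trans h1) (not_le.2 h2)
    | inr hκ =>
      exact le_antisymm (hb_mk_le c b) (hb_mk_le b c)


variable {H : Type} [NormedAddCommGroup H] [InnerProductSpace ℂ H] [CompleteSpace H]

/-- Membership in the Grassmannian `G_∞(H)`: closed subspaces whose dimension and
codimension are both infinite. -/
def inGinf (X : Submodule ℂ H) : Prop :=
  IsClosed (X : Set H) ∧ ¬ FiniteDimensional ℂ X ∧ ¬ FiniteDimensional ℂ Xᗮ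

/-- `f` sends every pair of subspaces of `G_∞(H)` to an equivalent pair: some linear
isometry of `H` maps one (unordered) pair onto the other. -/
def SendsPairsToEquiv (f : Submodule ℂ H → Submodule ℂ H) : Prop :=
  ∀ X Y : Submodule ℂ H, inGinf X → inGinf Y →
    ∃ L : H →ₗᵢ[ℂ] H,
      ({f X, f Y} : Set (Submodule ℂ H)) = {X.map L.toLinearMap, Y.map L.toLinearMap}

lemma nfd_mono {p q : Submodule ℂ H} (h : p ≤ q) (hp : ¬ FiniteDimensional ℂ p) :
    ¬ FiniteDimensional ℂ q := fun hq => hp (Submodule.finiteDimensional_of_le h)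

lemma map_orth_inf (L : H →ₗᵢ[ℂ] H) (A B : Submodule ℂ H) :
    (A.map L.toLinearMap)ᗮ ⊓ (B.map L.toLinearMap) = (Aᗮ ⊓ B).map L.toLinearMap := by
  ext x
  simp only [Submodule.mem_inf, Submodule.mem_map, Submodule.mem_orthogonal, LinearIsometry.coe_toLinearMap]
  constructor
  · rintro ⟨h1, u, huB, rfl⟩
    refine ⟨u, ⟨⟨?_, huB⟩, rfl⟩⟩
    intro a ha
    have := h1 (L a) ⟨a, ha, rfl⟩
    rwa [L.inner_map_map] at this
  · rintro ⟨u, ⟨⟨huA, huB⟩, rfl⟩⟩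
    refine ⟨?_, u, huB, rfl⟩
    rintro w ⟨a, ha, rfl⟩
    rw [L.inner_map_map]
    exact huA a ha

open Cardinal in
lemma mk_eq_of_map (L : H →ₗᵢ[ℂ] H) {S T : Submodule ℂ H} (h : T = S.map L.toLinearMap)
    {ι κ : Type} (b : HilbertBasis ι ℂ S) (c : HilbertBasis κ ℂ T) : #ι = #κ := by
  subst h
  let e : S ≃ₗᵢ[ℂ] (S.map L.toLinearMap : Submodule ℂ H) :=
    { toLinearEquiv := Submodule.equivMapOfInjective L.toLinearMap L.injective S
      norm_map' := by
        intro x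
        have h1 : ((Submodule.equivMapOfInjective L.toLinearMap L.injective S x : S.map L.toLinearMap) : H)
            = L x := Submodule.coe_equivMapOfInjective_apply L.toLinearMap L.injective S x
        calc ‖Submodule.equivMapOfInjective L.toLinearMap L.injective S x‖
            = ‖((Submodule.equivMapOfInjective L.toLinearMap L.injective S x :
                S.map L.toLinearMap) : H)‖ := rfl
          _ = ‖L x‖ := by rw [h1]
          _ = ‖(x : H)‖ := L.norm_map x
          _ = ‖x‖ := rfl }
  exact hb_mk_eq (HilbertBasis.ofRepr (e.symm.trans b.repr)) c

lemma nfd_of_orthonormal {p : Submodule ℂ H} (v : ℕ → H) (hv : Orthonormal ℂ v)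
    (hr : ∀ n, v n ∈ p) : ¬ FiniteDimensional ℂ p := by
  intro hfd
  let w : ℕ → p := fun n => ⟨v n, hr n⟩
  have hw : LinearIndependent ℂ w := by
    have h1 : LinearIndependent ℂ v := hv.linearIndependent
    have h2 : v = (p.subtype) ∘ w := rfl
    rw [h2] at h1
    exact h1.of_comp p.subtype
  have h2 := hw.cardinal_le_rank
  have h3 : (Cardinal.aleph0 : Cardinal) ≤ Module.rank ℂ p := by
    rw [← Cardinal.mk_nat]; exact h2
  exact absurd h3 (not_le.2 (Module.rank_lt_aleph0 ℂ p))

lemma eq_of_orth_inf_eq_bot {Y X : Submodule ℂ H} (hcl : IsClosed (Y : Set H)) (hYX : Y ≤ X)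
    (h : Yᗮ ⊓ X = ⊥) : Y = X := by
  refine le_antisymm hYX ?_
  intro x hx
  haveI : CompleteSpace Y := hcl.completeSpace_coe
  obtain ⟨y, hy, z, hz, rfl⟩ := Y.exists_add_mem_mem_orthogonal x
  have hzX : z ∈ X := by
    have := X.sub_mem hx (hYX hy)
    simpa using this
  have hzb : z ∈ Yᗮ ⊓ X := ⟨hz, hzX⟩
  rw [h, Submodule.mem_bot] at hzb
  rw [hzb, add_zero]
  exact hy

lemma exists_split {S : Submodule ℂ H} (hcl : IsClosed (S : Set H))
    (hnf : ¬ FiniteDimensional ℂ S) :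
    ∃ P : Submodule ℂ H, P ≤ S ∧ IsClosed (P : Set H) ∧ ¬ FiniteDimensional ℂ P ∧
      ¬ FiniteDimensional ℂ (Pᗮ ⊓ S : Submodule ℂ H) := by
  haveI : CompleteSpace S := hcl.completeSpace_coe
  obtain ⟨w, bS, hbS⟩ := exists_hilbertBasis ℂ S
  haveI : Infinite w := by
    by_contra h
    rw [not_infinite_iff_finite] at h
    haveI := Fintype.ofFinite w
    exact hnf (Module.Finite.of_basis bS.toOrthonormalBasis.toBasis)
  let g := Infinite.natEmbedding w
  let v : ℕ → H := fun n => ((g n : S) : H)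
  have hv : Orthonormal ℂ v := by
    have h1 : Orthonormal ℂ bS := bS.orthonormal
    rw [hbS] at h1
    have h2 : Orthonormal ℂ (fun x : w => ((x : S) : H)) :=
      (S.subtypeₗᵢ.orthonormal_comp_iff).2 h1
    exact h2.comp g g.injective
  set P : Submodule ℂ H :=
    (Submodule.span ℂ (Set.range fun n => v (2 * n))).topologicalClosure with hP
  have hsub : ∀ n, v n ∈ S := fun n => (g n : S).2
  have hPle : P ≤ S := by
    refine Submodule.topologicalClosure_minimal _ ?_ hcl
    rw [Submodule.span_le]
    rintro x ⟨n, rfl⟩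
    exact hsub (2 * n)
  refine ⟨P, hPle, Submodule.isClosed_topologicalClosure _, ?_, ?_⟩
  · refine nfd_of_orthonormal (fun n => v (2 * n)) (hv.comp _ fun a b h => by omega) ?_
    intro n
    exact Submodule.le_topologicalClosure _ (Submodule.subset_span ⟨n, rfl⟩)
  · refine nfd_of_orthonormal (fun n => v (2 * n + 1)) (hv.comp _ fun a b h => by omega) ?_
    intro n
    refine ⟨?_, hsub (2 * n + 1)⟩
    have horth : v (2 * n + 1) ∈ (Submodule.span ℂ (Set.range fun m => v (2 * m)))ᗮ := by
      have hio : Submodule.span ℂ {v (2 * n + 1)} ⟂ Submodule.span ℂ (Set.range fun m => v (2 * m)) := by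
        rw [Submodule.isOrtho_span]
        rintro u hu x ⟨m, rfl⟩
        rcases hu with rfl
        exact hv.2 (by omega : 2 * n + 1 ≠ 2 * m)
      exact hio (Submodule.mem_span_singleton_self _)
    rw [hP]
    intro u hu
    have h5 : (Submodule.span ℂ (Set.range fun m => v (2 * m))).topologicalClosure
        ≤ (Submodule.span ℂ {v (2 * n + 1)})ᗮ := by
      refine Submodule.topologicalClosure_minimal _ ?_ (Submodule.isClosed_orthogonal _)
      intro a ha
      exact fun s hs => by
        rcases Submodule.mem_span_singleton.1 hs with ⟨c, rfl⟩
        rw [inner_smul_left]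
        have : inner (𝕜 := ℂ) (v (2 * n + 1)) a = 0 := by
          have := horth a ha
          rw [← inner_conj_symm, this, map_zero]
        rw [this, mul_zero]
    have h6 := h5 hu
    have := h6 (v (2 * n + 1)) (Submodule.mem_span_singleton_self _)
    rw [← inner_conj_symm, this, map_zero]

lemma comp_iff {f : Submodule ℂ H → Submodule ℂ H} (hpair : SendsPairsToEquiv f)
    {A B : Submodule ℂ H} (hA : inGinf A) (hB : inGinf B) :
    (A ≤ B ∨ B ≤ A) ↔ (f A ≤ f B ∨ f B ≤ f A) := by
  obtain ⟨L, hL⟩ := hpair A B hA hB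
  rcases Set.pair_eq_pair_iff.1 hL with ⟨h1, h2⟩ | ⟨h1, h2⟩
  · rw [h1, h2, Submodule.map_le_map_iff_of_injective (f := L.toLinearMap) L.injective,
      Submodule.map_le_map_iff_of_injective (f := L.toLinearMap) L.injective]
  · rw [h1, h2, Submodule.map_le_map_iff_of_injective (f := L.toLinearMap) L.injective,
      Submodule.map_le_map_iff_of_injective (f := L.toLinearMap) L.injective]
    exact or_comm

/-- a map of `G_∞(H)` sending every pair of subspaces to an equivalent
pair preserves the codimension of `Y` in `X` for `Y ⊆ X`: the Hilbert dimension of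
the orthogonal complement of `Y` inside `X` equals that of the orthogonal complement
of `f Y` inside `f X`. -/
theorem stmt8 (hH : ¬ FiniteDimensional ℂ H)
    (f : Submodule ℂ H → Submodule ℂ H)
    (hf : ∀ X, inGinf X → inGinf (f X))
    (hpair : SendsPairsToEquiv f) :
    ∀ X Y : Submodule ℂ H, inGinf X → inGinf Y → Y ≤ X →
      ∀ (ι κ : Type) (_ : HilbertBasis ι ℂ (Yᗮ ⊓ X : Submodule ℂ H))
        (_ : HilbertBasis κ ℂ ((f Y)ᗮ ⊓ f X : Submodule ℂ H)),
        Cardinal.mk ι = Cardinal.mk κ := by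
  intro X Y hX hY hYX ι κ bι bκ
  obtain ⟨L, hL⟩ := hpair X Y hX hY
  rcases Set.pair_eq_pair_iff.1 hL with ⟨h1, h2⟩ | ⟨h1, h2⟩
  · refine mk_eq_of_map L ?_ bι bκ
    rw [h1, h2, map_orth_inf]
  · by_cases hXY : Y = X
    · subst hXY
      have e1 : Yᗮ ⊓ Y = (⊥ : Submodule ℂ H) := by
        rw [inf_comm]; exact Y.orthogonal_disjoint.eq_bot
      have e2 : (f Y)ᗮ ⊓ f Y = (⊥ : Submodule ℂ H) := by
        rw [inf_comm]; exact (f Y).orthogonal_disjoint.eq_bot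
      haveI hι : IsEmpty ι := by
        rw [← not_nonempty_iff]
        rintro ⟨i⟩
        have h1n : ‖bι i‖ = 1 := bι.orthonormal.1 i
        have h0 : ((bι i : (Yᗮ ⊓ Y : Submodule ℂ H)) : H) = 0 := by
          have hm := (e1.le : Yᗮ ⊓ Y ≤ ⊥) (bι i).2
          exact (Submodule.mem_bot ℂ).1 hm
        have : ‖bι i‖ = 0 := by
          have : ‖((bι i : (Yᗮ ⊓ Y : Submodule ℂ H)) : H)‖ = 0 := by rw [h0, norm_zero]
          exact this
        rw [this] at h1n
        exact zero_ne_one h1n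
      haveI hκ : IsEmpty κ := by
        rw [← not_nonempty_iff]
        rintro ⟨k⟩
        have h1n : ‖bκ k‖ = 1 := bκ.orthonormal.1 k
        have h0 : ((bκ k : ((f Y)ᗮ ⊓ f Y : Submodule ℂ H)) : H) = 0 := by
          have hm := (e2.le : (f Y)ᗮ ⊓ f Y ≤ ⊥) (bκ k).2
          exact (Submodule.mem_bot ℂ).1 hm
        have : ‖bκ k‖ = 0 := by
          have : ‖((bκ k : ((f Y)ᗮ ⊓ f Y : Submodule ℂ H)) : H)‖ = 0 := by rw [h0, norm_zero]
          exact this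
        rw [this] at h1n
        exact zero_ne_one h1n
      simp [Cardinal.mk_eq_zero]
    · exfalso
      have hfXY : f X ≤ f Y := by
        rw [h1, h2]; exact Submodule.map_mono hYX
      obtain ⟨P, hPY, hPcl, hPnf, hPcnf⟩ := exists_split hY.1 hY.2.1
      set Q : Submodule ℂ H := Pᗮ ⊓ Y with hQdef
      set Z : Submodule ℂ H := Qᗮ ⊓ X with hZdef
      have hZX : Z ≤ X := inf_le_right
      have hZcl : IsClosed (Z : Set H) := by
        rw [hZdef, Submodule.coe_inf]
        exact (Submodule.isClosed_orthogonal _).inter hX.1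
      have hPZ : P ≤ Z := by
        refine le_inf ?_ (hPY.trans hYX)
        exact le_trans P.le_orthogonal_orthogonal (Submodule.orthogonal_le inf_le_left)
      have hZGinf : inGinf Z :=
        ⟨hZcl, nfd_mono hPZ hPnf, nfd_mono (Submodule.orthogonal_le hZX) hX.2.2⟩
      set W : Submodule ℂ H := Zᗮ ⊓ X with hWdef
      have hWX : W ≤ X := inf_le_right
      have hQW : Q ≤ W := by
        refine le_inf ?_ (inf_le_right.trans hYX)
        exact le_trans Q.le_orthogonal_orthogonal (Submodule.orthogonal_le inf_le_left)
      have hWcl : IsClosed (W : Set H) := by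
        rw [hWdef, Submodule.coe_inf]
        exact (Submodule.isClosed_orthogonal _).inter hX.1
      have hWGinf : inGinf W :=
        ⟨hWcl, nfd_mono hQW hPcnf,
          nfd_mono (le_trans Z.le_orthogonal_orthogonal (Submodule.orthogonal_le inf_le_left))
            (nfd_mono hPZ hPnf)⟩
      -- Z is incomparable with Y
      have hZY : ¬(Z ≤ Y ∨ Y ≤ Z) := by
        rintro (h | h)
        · have hVne : Yᗮ ⊓ X ≠ ⊥ := fun hb => hXY (eq_of_orth_inf_eq_bot hY.1 hYX hb)
          obtain ⟨v, hv, hvne⟩ := Submodule.exists_mem_ne_zero_of_ne_bot hVne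
          have hvZ : v ∈ Z := by
            refine ⟨?_, hv.2⟩
            exact (Submodule.orthogonal_le inf_le_right) hv.1
          have : v ∈ Yᗮ ⊓ Y := ⟨hv.1, h hvZ⟩
          rw [inf_comm, Y.orthogonal_disjoint.eq_bot, Submodule.mem_bot] at this
          exact hvne this
        · have hQne : Q ≠ ⊥ := by
            intro hb
            exact hPcnf (by rw [hb]; infer_instance)
          obtain ⟨q, hq, hqne⟩ := Submodule.exists_mem_ne_zero_of_ne_bot hQne
          have hqZ : q ∈ Z := h hq.2
          have : q ∈ Qᗮ ⊓ Q := ⟨hqZ.1, hq⟩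
          rw [inf_comm, Q.orthogonal_disjoint.eq_bot, Submodule.mem_bot] at this
          exact hqne this
      have hfZX : f X ≤ f Z := by
        rcases (comp_iff hpair hZGinf hX).1 (Or.inl hZX) with h | h
        · exact absurd ((comp_iff hpair hZGinf hY).2 (Or.inl (h.trans hfXY))) hZY
        · exact h
      have hWZbot : f W ⊓ f Z = ⊥ := by
        obtain ⟨Pp, hPp⟩ := hpair W Z hWGinf hZGinf
        have hWZ : W ⊓ Z = ⊥ := by
          rw [← le_bot_iff]
          calc W ⊓ Z ≤ Zᗮ ⊓ Z := inf_le_inf_right Z inf_le_left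
            _ = ⊥ := by rw [inf_comm]; exact Z.orthogonal_disjoint.eq_bot
        rcases Set.pair_eq_pair_iff.1 hPp with ⟨e1, e2⟩ | ⟨e1, e2⟩
        · rw [e1, e2, ← Submodule.map_inf Pp.toLinearMap Pp.injective, hWZ, Submodule.map_bot]
        · rw [e1, e2, ← Submodule.map_inf Pp.toLinearMap Pp.injective, inf_comm, hWZ,
            Submodule.map_bot]
      rcases (comp_iff hpair hWGinf hX).1 (Or.inl hWX) with h | h
      · have hle : f W ≤ ⊥ := hWZbot ▸ le_inf le_rfl (h.trans hfZX)
        exact (hf W hWGinf).2.1 (by rw [le_bot_iff.1 hle]; infer_instance)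
      · have hle : f X ≤ ⊥ := hWZbot ▸ le_inf h hfZX
        exact (hf X hX).2.1 (by rw [le_bot_iff.1 hle]; infer_instance)
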